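/- Let ε ∈ [0,1/2) and let F_ε be the qubit dephasing channel F_ε(ρ) = (1−ε)ρ + ε σ_z ρ σ_z, where σ_z is the Pauli Z matrix. Then F_ε is invertible as a linear map on M₂(ℂ) and ν(F_ε⁻¹) = log₂(1/(1−2ε)). -/

import Mathlib

open scoped Kronecker ComplexOrder
open Matrix

noncomputable section

/-- `id_k ⊗ N` applied blockwise. -/
def idTensor {n m : Type*} (k : Type*)
    (N : Matrix n n ℂ → Matrix m m ℂ)
    (M : Matrix (k × n) (k × n) ℂ) : Matrix (k × m) (k × m) ℂ :=
  Matrix.of fun p q => N (Matrix.of fun a b => M (p.1, a) (q.1, b)) p.2 q.2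

/-- Trace-preserving. -/
def IsTP {n m : Type*} [Fintype n] [Fintype m]
    (N : Matrix n n ℂ → Matrix m m ℂ) : Prop :=
  ∀ X, (N X).trace = X.trace

/-- Hermitian-preserving. -/
def IsHP {n m : Type*} (N : Matrix n n ℂ → Matrix m m ℂ) : Prop :=
  ∀ X, X.IsHermitian → (N X).IsHermitian

/-- Completely positive: for every `k`, `id_k ⊗ N` preserves positive semidefiniteness. -/
def IsCP {n m : Type*} [Fintype n] [Fintype m]
    (N : Matrix n n ℂ → Matrix m m ℂ) : Prop :=
  ∀ (k : ℕ) (M : Matrix (Fin k × n) (Fin k × n) ℂ),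
    M.PosSemidef → (idTensor (Fin k) N M).PosSemidef

/-- Completely positive and trace-preserving (quantum channel). -/
def IsCPTP {n m : Type*} [Fintype n] [Fintype m]
    (N : Matrix n n ℂ → Matrix m m ℂ) : Prop :=
  IsLinearMap ℂ N ∧ IsCP N ∧ IsTP N

/-- Completely positive and trace non-increasing. -/
def IsCPTN {n m : Type*} [Fintype n] [Fintype m]
    (N : Matrix n n ℂ → Matrix m m ℂ) : Prop :=
  IsLinearMap ℂ N ∧ IsCP N ∧ ∀ X : Matrix n n ℂ, X.PosSemidef → (N X).trace ≤ X.trace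

/-- Costs of finite quasiprobability decompositions of `N` into CPTP maps. -/
def decompCosts {n m : Type*} [Fintype n] [Fintype m]
    (N : Matrix n n ℂ → Matrix m m ℂ) : Set ℝ :=
  { c | ∃ (s : ℕ) (η : Fin s → ℝ) (O : Fin s → (Matrix n n ℂ → Matrix m m ℂ)),
      (∀ i, IsCPTP (O i)) ∧ (∀ X, N X = ∑ i, (η i : ℂ) • O i X) ∧ c = ∑ i, |η i| }

/-- The physical implementability `ν(N)`. -/
noncomputable def nu {n m : Type*} [Fintype n] [Fintype m]
    (N : Matrix n n ℂ → Matrix m m ℂ) : ℝ :=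
  Real.logb 2 (sInf (decompCosts N))

/-- The Choi matrix of a linear map. -/
def choiMatrix {n m : Type*} [DecidableEq n]
    (N : Matrix n n ℂ → Matrix m m ℂ) : Matrix (n × m) (n × m) ℂ :=
  Matrix.of fun p q => N (Matrix.single p.1 q.1 1) p.2 q.2

/-- Partial trace over the second tensor factor. -/
def ptraceB {n m : Type*} [Fintype m] (J : Matrix (n × m) (n × m) ℂ) :
    Matrix n n ℂ :=
  Matrix.of fun i j => ∑ a, J (i, a) (j, a)

/-- The trace norm of a matrix. -/
noncomputable def traceNorm {k : Type*} [Fintype k] [DecidableEq k]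
    (X : Matrix k k ℂ) : ℝ :=
  (((Matrix.posSemidef_conjTranspose_mul_self X).1.eigenvectorUnitary.1 *
      diagonal ((fun x : ℝ => (x : ℂ)) ∘ (√·) ∘ (Matrix.posSemidef_conjTranspose_mul_self X).1.eigenvalues) *
      (star (Matrix.posSemidef_conjTranspose_mul_self X).1.eigenvectorUnitary :
        Matrix k k ℂ)).trace).re

/-- Tensor product of two maps. -/
def tensorMap {n₁ n₂ m₂ : Type*} [Fintype n₁] [DecidableEq n₁]
    (M : Matrix n₁ n₁ ℂ → Matrix n₁ n₁ ℂ) (N : Matrix n₂ n₂ ℂ → Matrix m₂ m₂ ℂ)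
    (X : Matrix (n₁ × n₂) (n₁ × n₂) ℂ) : Matrix (n₁ × m₂) (n₁ × m₂) ℂ :=
  ∑ i : n₁, ∑ j : n₁,
    (M (Matrix.single i j 1)) ⊗ₖ (N (Matrix.of fun a b => X (i, a) (j, b)))


/-- The qubit dephasing channel `F_ε(ρ) = (1−ε)ρ + ε σ_z ρ σ_z`. -/
def dephasing (ε : ℝ) (X : Matrix (Fin 2) (Fin 2) ℂ) : Matrix (Fin 2) (Fin 2) ℂ :=
  ((1 - ε : ℝ) : ℂ) • X + (ε : ℂ) • (!![1, 0; 0, -1] * X * !![1, 0; 0, -1])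

namespace NuDephasing

def Zm : Matrix (Fin 2) (Fin 2) ℂ := !![1, 0; 0, -1]

lemma Zm_diag : Zm = Matrix.diagonal ![1, -1] := by
  ext i j
  fin_cases i <;> fin_cases j <;> simp [Zm]

lemma Zm_mul_Zm : Zm * Zm = 1 := by
  ext i j
  fin_cases i <;> fin_cases j <;>
    simp [Zm, Matrix.mul_apply, Fin.sum_univ_two, Matrix.one_apply]

lemma isCPTP_id : IsCPTP (fun X : Matrix (Fin 2) (Fin 2) ℂ => X) := by
  refine ⟨⟨fun _ _ => rfl, fun _ _ => rfl⟩, ?_, fun _ => rfl⟩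
  intro k M hM
  have : idTensor (Fin k) (fun X : Matrix (Fin 2) (Fin 2) ℂ => X) M = M := by
    ext p q
    simp [idTensor]
  rw [this]; exact hM

lemma isCPTP_conj : IsCPTP (fun X : Matrix (Fin 2) (Fin 2) ℂ => Zm * X * Zm) := by
  refine ⟨⟨fun X Y => by noncomm_ring, fun c X => by
    simp [Matrix.mul_smul, Matrix.smul_mul]⟩, ?_, ?_⟩
  · intro k M hM
    set D : Matrix (Fin k × Fin 2) (Fin k × Fin 2) ℂ :=
      Matrix.diagonal (fun p => ![1, -1] p.2) with hD
    have key : idTensor (Fin k) (fun X => Zm * X * Zm) M = Dᴴ * M * D := by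
      ext p q
      simp only [idTensor, Matrix.of_apply, Zm_diag, hD, Matrix.diagonal_conjTranspose,
        Matrix.diagonal_mul, Matrix.mul_diagonal, Matrix.of_apply, Pi.star_apply]
      obtain ⟨pk, pi⟩ := p; obtain ⟨qk, qi⟩ := q
      fin_cases pi <;> fin_cases qi <;> simp <;> ring
    rw [key]
    exact hM.conjTranspose_mul_mul_same D
  · intro X
    rw [Matrix.trace_mul_cycle, Zm_mul_Zm, Matrix.one_mul]

lemma isCP_apply {n m : Type*} [Fintype n] [Fintype m] [DecidableEq n]
    {N : Matrix n n ℂ → Matrix m m ℂ} (hN : IsCP N)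
    {X : Matrix n n ℂ} (hX : X.PosSemidef) : (N X).PosSemidef := by
  have h1 : (X.submatrix (Prod.snd : Fin 1 × n → n) Prod.snd).PosSemidef :=
    hX.submatrix _
  have h2 := hN 1 _ h1
  have h3 : idTensor (Fin 1) N (X.submatrix Prod.snd Prod.snd)
      = (N X).submatrix (Prod.snd : Fin 1 × m → m) Prod.snd := by
    ext p q
    simp only [idTensor, Matrix.of_apply, Matrix.submatrix_apply]
    congr 1
  rw [h3] at h2
  have h4 := h2.submatrix (fun i : m => ((0 : Fin 1), i))
  have h5 : ((N X).submatrix (Prod.snd : Fin 1 × m → m) Prod.snd).submatrix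
      (fun i : m => ((0 : Fin 1), i)) (fun i : m => ((0 : Fin 1), i)) = N X := by
    ext i j; simp
  rwa [h5] at h4

lemma psd_offdiag {M : Matrix (Fin 2) (Fin 2) ℂ} (hM : M.PosSemidef) :
    2 * ‖M 0 1‖ ≤ M.trace.re := by
  have hdiag : ∀ i, 0 ≤ (M i i).re := by
    intro i
    have := hM.re_dotProduct_nonneg (Pi.single i 1)
    simpa [dotProduct, Matrix.mulVec, Pi.single_apply, Fin.sum_univ_two] using this
  by_cases h : M 0 1 = 0
  · have := hdiag 0; have := hdiag 1
    simp only [h, map_zero, norm_zero, mul_zero, Matrix.trace_fin_two, Complex.add_re]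
    linarith
  · set r : ℝ := ‖M 0 1‖ with hr
    have hrpos : 0 < r := norm_pos_iff.mpr h
    set z : ℂ := -(starRingEnd ℂ) (M 0 1) / r with hz
    have h10 : M 1 0 = (starRingEnd ℂ) (M 0 1) := by
      have := congrFun (congrFun hM.1.eq 1) 0
      simpa [Matrix.conjTranspose_apply] using this.symm
    have hz1 : z * M 0 1 = -(r : ℂ) := by
      rw [hz]
      field_simp
      rw [mul_comm, Complex.mul_conj]
      push_cast [← Complex.sq_norm]
      ring
    have hz2 : (starRingEnd ℂ) z * M 1 0 = -(r : ℂ) := by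
      rw [h10, ← map_mul (starRingEnd ℂ), hz1]
      simp
    have hz3 : (starRingEnd ℂ) z * z = 1 := by
      rw [hz]
      simp only [map_div₀, map_neg, Complex.conj_conj, Complex.conj_ofReal]
      field_simp
      rw [Complex.mul_conj']
    set v : Fin 2 → ℂ := ![1, z] with hv
    have hs : star v ⬝ᵥ M *ᵥ v = M 0 0 + M 1 1 - 2 * (r : ℂ) := by
      simp only [dotProduct, Matrix.mulVec, Fin.sum_univ_two, hv, Pi.star_apply,
        Matrix.cons_val_zero, Matrix.cons_val_one, Matrix.head_cons, star_one, Complex.star_def, _root_.map_one]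
      linear_combination hz1 + hz2 + (M 1 1) * hz3
    have hpos := hM.dotProduct_mulVec_nonneg v
    rw [hs] at hpos
    have hre : (0 : ℝ) ≤ (M 0 0 + M 1 1 - 2 * (r : ℂ)).re := by
      have := (Complex.le_def.mp hpos).1
      simpa using this
    simp only [Complex.sub_re, Complex.add_re, Complex.mul_re, Complex.ofReal_re,
      Complex.ofReal_im] at hre
    simp only [Matrix.trace_fin_two, Complex.add_re]
    norm_num at hre ⊢
    linarith

end NuDephasing

/-- the qubit dephasing channel `F_ε` (with `0 ≤ ε < 1/2`) is invertible
and `ν(F_ε⁻¹) = log₂(1/(1−2ε))`. -/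

theorem nu_dephasing_inverse (ε : ℝ) (hε0 : 0 ≤ ε) (hε1 : ε < 1 / 2) :
    ∃ Finv : Matrix (Fin 2) (Fin 2) ℂ → Matrix (Fin 2) (Fin 2) ℂ,
      IsLinearMap ℂ Finv ∧ (∀ X, Finv (dephasing ε X) = X) ∧
      nu Finv = Real.logb 2 (1 / (1 - 2 * ε)) := by
  classical
  set δ : ℝ := 1 - 2 * ε with hδdef
  have hδ : 0 < δ := by rw [hδdef]; linarith
  set a : ℝ := (1 - ε) / δ with ha
  set b : ℝ := -ε / δ with hb
  set Finv : Matrix (Fin 2) (Fin 2) ℂ → Matrix (Fin 2) (Fin 2) ℂ :=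
    fun X => (a : ℂ) • X + (b : ℂ) • (NuDephasing.Zm * X * NuDephasing.Zm) with hF
  open NuDephasing in
  refine ⟨Finv, ⟨?_, ?_⟩, ?_, ?_⟩
  · intro X Y
    simp only [hF, Matrix.mul_add, Matrix.add_mul]
    module
  · intro c X
    simp only [hF, Matrix.mul_smul, Matrix.smul_mul]
    module
  · intro X
    have hzz : ∀ Y : Matrix (Fin 2) (Fin 2) ℂ, Zm * (Zm * Y * Zm) * Zm = Y := by
      intro Y
      calc Zm * (Zm * Y * Zm) * Zm = (Zm * Zm) * Y * (Zm * Zm) := by noncomm_ring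
        _ = Y := by rw [Zm_mul_Zm, Matrix.one_mul, Matrix.mul_one]
    have hc1 : a * (1 - ε) + b * ε = 1 := by
      rw [ha, hb]; field_simp; ring
    have hc2 : a * ε + b * (1 - ε) = 0 := by
      rw [ha, hb]; field_simp; ring
    have expand : (a : ℂ) • (dephasing ε X) + (b : ℂ) • (Zm * (dephasing ε X) * Zm)
        = ((a * (1 - ε) + b * ε : ℝ) : ℂ) • X
          + ((a * ε + b * (1 - ε) : ℝ) : ℂ) • (Zm * X * Zm) := by
      show (a : ℂ) • (((1 - ε : ℝ) : ℂ) • X + (ε : ℂ) • (Zm * X * Zm))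
          + (b : ℂ) • (Zm * (((1 - ε : ℝ) : ℂ) • X + (ε : ℂ) • (Zm * X * Zm)) * Zm) = _
      simp only [Matrix.mul_add, Matrix.add_mul, Matrix.mul_smul, Matrix.smul_mul, hzz]
      push_cast
      module
    show (a : ℂ) • (dephasing ε X) + (b : ℂ) • (Zm * (dephasing ε X) * Zm) = X
    rw [expand, hc1, hc2]
    simp
  · -- the value of nu
    have ha0 : 0 ≤ a := div_nonneg (by linarith) hδ.le
    have hb0 : b ≤ 0 := div_nonpos_of_nonpos_of_nonneg (by linarith) hδ.le
    set ρ : Matrix (Fin 2) (Fin 2) ℂ := !![1/2, 1/2; 1/2, 1/2] with hρ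
    have hρpsd : ρ.PosSemidef := by
      refine Matrix.PosSemidef.of_dotProduct_mulVec_nonneg ?_ ?_
      · ext i j
        fin_cases i <;> fin_cases j <;> simp [hρ, Matrix.conjTranspose_apply]
      · intro x
        have hx : star x ⬝ᵥ ρ *ᵥ x
            = ((1/2 : ℝ) : ℂ) * ((x 0 + x 1) * (starRingEnd ℂ) (x 0 + x 1)) := by
          simp [dotProduct, Matrix.mulVec, Fin.sum_univ_two, hρ, Complex.star_def]
          ring
        rw [hx, Complex.mul_conj']
        have hcast : ((1/2 : ℝ) : ℂ) * ((‖x 0 + x 1‖ : ℂ))^2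
            = ((1/2 * ‖x 0 + x 1‖^2 : ℝ) : ℂ) := by push_cast; ring
        rw [hcast, Complex.zero_le_real]
        positivity
    have hρtr : ρ.trace = 1 := by
      rw [Matrix.trace_fin_two]
      norm_num [hρ]
    have hZρZ : (Zm * ρ * Zm) 0 1 = -(1/2 : ℂ) := by
      rw [Matrix.mul_apply, Fin.sum_univ_two, Matrix.mul_apply, Fin.sum_univ_two,
        Matrix.mul_apply, Fin.sum_univ_two]
      norm_num [Zm, hρ]
    have hab : a - b = 1 / δ := by rw [ha, hb]; field_simp; ring
    have hFρ : (Finv ρ) 0 1 = ((1 / (2 * δ) : ℝ) : ℂ) := by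
      rw [hF]
      simp only [Matrix.add_apply, Matrix.smul_apply, hZρZ, smul_eq_mul]
      have hρ01 : ρ 0 1 = (1/2 : ℂ) := by simp [hρ]
      rw [hρ01]
      have : a * (1/2) - b * (1/2) = 1 / (2 * δ) := by
        rw [mul_comm a, mul_comm b, ← mul_sub, hab]; field_simp
      push_cast [← this]
      ring
    have hlb : ∀ c ∈ decompCosts Finv, 1 / δ ≤ c := by
      rintro c ⟨s, η, O, hO, hdec, rfl⟩
      have key : ∀ i, ‖(O i ρ) 0 1‖ ≤ 1 / 2 := by
        intro i
        have hpsd := isCP_apply (hO i).2.1 hρpsd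
        have htr : (O i ρ).trace = 1 := by rw [(hO i).2.2 ρ, hρtr]
        have h2 := psd_offdiag hpsd
        rw [htr] at h2
        simp only [Complex.one_re] at h2
        linarith
      have h01 : (Finv ρ) 0 1 = ∑ i, (η i : ℂ) * (O i ρ) 0 1 := by
        rw [hdec ρ]
        simp [Matrix.sum_apply]
      have habs : 1 / (2 * δ) ≤ (∑ i, |η i|) / 2 := by
        have h1 : ‖(Finv ρ) 0 1‖ = 1 / (2 * δ) := by
          rw [hFρ, Complex.norm_real, Real.norm_eq_abs, abs_of_nonneg]
          positivity
        calc 1 / (2 * δ) = ‖(Finv ρ) 0 1‖ := h1.symm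
          _ = ‖∑ i, (η i : ℂ) * (O i ρ) 0 1‖ := by rw [h01]
          _ ≤ ∑ i, ‖(η i : ℂ) * (O i ρ) 0 1‖ :=
              norm_sum_le _ _
          _ = ∑ i, |η i| * ‖(O i ρ) 0 1‖ := by
              simp [norm_mul, Complex.norm_real]
          _ ≤ ∑ i, |η i| * (1 / 2) :=
              Finset.sum_le_sum fun i _ =>
                mul_le_mul_of_nonneg_left (key i) (abs_nonneg _)
          _ = (∑ i, |η i|) / 2 := by rw [← Finset.sum_mul]; ring
      have h2 : 1 / (2*δ) = (1/δ)/2 := by rw [div_div, mul_comm]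
      rw [h2] at habs
      linarith
    have hmem : 1 / δ ∈ decompCosts Finv := by
      refine ⟨2, ![a, b], ![fun X => X, fun X => Zm * X * Zm], ?_, ?_, ?_⟩
      · intro i
        fin_cases i
        · exact isCPTP_id
        · exact isCPTP_conj
      · intro X
        rw [Fin.sum_univ_two]
        simp [hF]
      · rw [Fin.sum_univ_two]
        simp only [Matrix.cons_val_zero, Matrix.cons_val_one, Matrix.head_cons]
        rw [abs_of_nonneg ha0, abs_of_nonpos hb0, ← hab]
        ring
    have hinf : sInf (decompCosts Finv) = 1 / δ :=
      le_antisymm (csInf_le ⟨1 / δ, fun c hc => hlb c hc⟩ hmem)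
        (le_csInf ⟨_, hmem⟩ hlb)
    unfold nu
    rw [hinf]

end
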